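/- arXiv:1101.0796 — 2 statements merged into one kernel-verified Lean document; each statement's English description precedes it below -/
import Mathlib

section
/- Let (b_i) be a finite sequence of nonnegative reals with each b_i ≤ β^{k-1} and ∑_i b_i ≤ β^{k+1}, where β ≥ 1. Form a random subset W by including each index i independently with probability β^{-2}. Let X = ∑_{i ∈ W} b_i. Then E[X] ≤ β^{k-1}, and by a Chernoff-type bound, P(X > β^k) ≤ (e/β)^β (i.e., the probability is of order 1/β!). -/
open scoped BigOperators

/-- Random subset sum: each index is included independently with probability `β⁻²`.
If each `b i ≤ β^(k-1)` and `∑ b i ≤ β^(k+1)`, then the expected value of the subset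
sum is at most `β^(k-1)`, and the probability that the subset sum exceeds `β^k` is
at most `(e/β)^β`. -/
theorem stmt_1 (β : ℝ) (hβ : 1 ≤ β) (k N : ℕ) (hk : 1 ≤ k)
    (b : Fin N → ℝ) (hb0 : ∀ i, 0 ≤ b i) (hb1 : ∀ i, b i ≤ β ^ (k - 1))
    (hsum : ∑ i, b i ≤ β ^ (k + 1)) :
    (β⁻¹ ^ 2 * ∑ i, b i ≤ β ^ (k - 1)) ∧
    (∑ S : Finset (Fin N),
        ((β⁻¹ ^ 2) ^ S.card * (1 - β⁻¹ ^ 2) ^ (N - S.card) *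
          (if β ^ k < ∑ i ∈ S, b i then (1 : ℝ) else 0)))
      ≤ (Real.exp 1 / β) ^ β := by
  have hβ0 : (0:ℝ) < β := lt_of_lt_of_le one_pos hβ
  set B : ℝ := β ^ (k - 1) with hBdef
  have hB : (0:ℝ) < B := pow_pos hβ0 _
  set p : ℝ := β⁻¹ ^ 2 with hpdef
  have hp0 : (0:ℝ) ≤ p := by positivity
  have hp1 : p ≤ 1 := by
    rw [hpdef]
    exact pow_le_one₀ (by positivity) (inv_le_one_of_one_le₀ hβ)
  set L : ℝ := Real.log β with hLdef
  have hL0 : 0 ≤ L := Real.log_nonneg hβ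
  have hexpL : Real.exp L = β := Real.exp_log hβ0
  have hβk : β ^ k = B * β := by
    rw [hBdef, ← pow_succ]; congr 1; omega
  have hβk1 : β ^ (k+1) = B * β ^ 2 := by
    rw [hBdef, ← pow_add]; congr 1; omega
  have hpB : p * β ^ (k+1) = B := by
    rw [hpdef, hβk1, inv_pow]; field_simp
  constructor
  · calc p * ∑ i, b i ≤ p * β ^ (k+1) := mul_le_mul_of_nonneg_left hsum hp0
      _ = B := hpB
  · -- Chernoff bound
    have key : ∀ S : Finset (Fin N),
        (if β ^ k < ∑ i ∈ S, b i then (1:ℝ) else 0) ≤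
          Real.exp (L / B * (∑ i ∈ S, b i) - L * β) := by
      intro S
      split_ifs with h
      · apply Real.one_le_exp
        have h1 : L / B * (β ^ k) = L * β := by
          rw [hβk]; field_simp
        have h2 : L / B * (β ^ k) ≤ L / B * (∑ i ∈ S, b i) :=
          mul_le_mul_of_nonneg_left h.le (by positivity)
        linarith
      · positivity
    have wpos : ∀ S : Finset (Fin N), 0 ≤ p ^ S.card * (1-p) ^ (N - S.card) := by
      intro S
      have h1p : 0 ≤ 1 - p := by linarith
      exact mul_nonneg (pow_nonneg hp0 _) (pow_nonneg h1p _)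
    have step1 : (∑ S : Finset (Fin N),
        (p ^ S.card * (1 - p) ^ (N - S.card) *
          (if β ^ k < ∑ i ∈ S, b i then (1 : ℝ) else 0)))
        ≤ ∑ S : Finset (Fin N),
            p ^ S.card * (1 - p) ^ (N - S.card) *
              Real.exp (L / B * (∑ i ∈ S, b i) - L * β) := by
      apply Finset.sum_le_sum
      intro S _
      exact mul_le_mul_of_nonneg_left (key S) (wpos S)
    have cardS : ∀ S : Finset (Fin N), (Finset.univ \ S).card = N - S.card := by
      intro S
      rw [Finset.card_sdiff_of_subset (Finset.subset_univ S), Finset.card_univ, Fintype.card_fin]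
    have step2 : (∑ S : Finset (Fin N),
            p ^ S.card * (1 - p) ^ (N - S.card) *
              Real.exp (L / B * (∑ i ∈ S, b i) - L * β))
        = Real.exp (-(L * β)) *
            ∏ i : Fin N, (p * Real.exp (L / B * b i) + (1 - p)) := by
      rw [Finset.prod_add, Finset.mul_sum]
      rw [show (Finset.univ : Finset (Fin N)).powerset = Finset.univ from
        Finset.powerset_univ]
      apply Finset.sum_congr rfl
      intro S _
      rw [Real.exp_sub, Finset.mul_sum, Real.exp_sum, ← cardS S]
      rw [Finset.prod_mul_distrib, Finset.prod_const, Finset.prod_const]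
      rw [Real.exp_neg]
      field_simp
    have step3 : (∏ i : Fin N, (p * Real.exp (L / B * b i) + (1 - p)))
        ≤ ∏ i : Fin N, Real.exp (p * (b i / B) * (β - 1)) := by
      apply Finset.prod_le_prod
      · intro i _
        have h1p : 0 ≤ 1 - p := by linarith
        have := Real.exp_nonneg (L / B * b i)
        nlinarith
      · intro i _
        set x : ℝ := b i / B with hxdef
        have hx0 : 0 ≤ x := div_nonneg (hb0 i) hB.le
        have hx1 : x ≤ 1 := by
          rw [hxdef, div_le_one hB]; exact hb1 i
        have hconv : Real.exp (L / B * b i) ≤ 1 - x + x * β := by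
          have := convexOn_exp.2 (Set.mem_univ (0:ℝ)) (Set.mem_univ L)
            (by linarith : (0:ℝ) ≤ 1 - x) hx0 (by ring)
          simp only [smul_eq_mul, mul_zero, zero_add, Real.exp_zero, mul_one] at this
          have heq : x * L = L / B * b i := by
            rw [hxdef]; field_simp
          rw [heq, hexpL] at this
          linarith
        have h2 : p * Real.exp (L / B * b i) + (1 - p) ≤ 1 + p * x * (β - 1) := by
          nlinarith [mul_le_mul_of_nonneg_left hconv hp0]
        calc p * Real.exp (L / B * b i) + (1 - p) ≤ 1 + p * x * (β - 1) := h2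
          _ ≤ Real.exp (p * x * (β - 1)) := by
              have := Real.add_one_le_exp (p * x * (β - 1))
              linarith
    have step4 : (∏ i : Fin N, Real.exp (p * (b i / B) * (β - 1)))
        ≤ Real.exp (β - 1) := by
      rw [← Real.exp_sum, Real.exp_le_exp]
      have heq : ∑ i : Fin N, p * (b i / B) * (β - 1)
          = p * (β - 1) / B * ∑ i, b i := by
        rw [Finset.mul_sum]; apply Finset.sum_congr rfl; intro i _; field_simp
      rw [heq]
      have hc : 0 ≤ p * (β - 1) / B :=
        div_nonneg (mul_nonneg hp0 (by linarith)) hB.le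
      calc p * (β - 1) / B * ∑ i, b i ≤ p * (β - 1) / B * β ^ (k+1) :=
            mul_le_mul_of_nonneg_left hsum hc
        _ = (β - 1) * (p * β ^ (k+1) / B) := by ring
        _ = β - 1 := by rw [hpB]; field_simp
    have goal_eq : (Real.exp 1 / β) ^ β = Real.exp (β - L * β) := by
      rw [Real.div_rpow (Real.exp_pos 1).le hβ0.le, Real.exp_one_rpow,
        Real.rpow_def_of_pos hβ0, ← hLdef, ← Real.exp_sub]
    calc (∑ S : Finset (Fin N),
        (p ^ S.card * (1 - p) ^ (N - S.card) *
          (if β ^ k < ∑ i ∈ S, b i then (1 : ℝ) else 0)))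
        ≤ Real.exp (-(L * β)) *
            ∏ i : Fin N, (p * Real.exp (L / B * b i) + (1 - p)) := by
          rw [← step2]; exact step1
      _ ≤ Real.exp (-(L * β)) * Real.exp (β - 1) := by
          apply mul_le_mul_of_nonneg_left _ (Real.exp_pos _).le
          exact le_trans step3 step4
      _ = Real.exp (β - 1 - L * β) := by rw [← Real.exp_add]; ring_nf
      _ ≤ Real.exp (β - L * β) := by
          rw [Real.exp_le_exp]; linarith
      _ = (Real.exp 1 / β) ^ β := goal_eq.symm
end

section
/- Fix constants c₁ ≥ 0, c₂ ≥ 0, ω > 1, c' ≥ 1 + c₁, and c > 0 with c₂·c·c' ≤ 1. Suppose z: (nodes of a tree) → ℝ satisfies: z(leaf) = 1; and for an internal node d at height n̄ with children at height n̄-1, z(d) ≤ c₁ + w(d)·(max over strong children z)·(1 + (c₂·c·c'/n)·1), where w(d) = 1 if d is trivial and w(d) ≤ ω if d is a fault; strong children of a trivial node d satisfy κ ≤ κ(d), strong children of a fault node satisfy κ ≤ κ(d) - 1, and inductively each child b at height n̄-1 satisfies z(b) ≤ c'·(n̄-1)·ω^{κ(b)}·(1 + c₂cc'/n)^{n̄-1}.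 Then z(d) ≤ c'·n̄·ω^{κ(d)}·(1 + c₂cc'/n)^{n̄} for every node d at height n̄ ≥ 1. -/
open scoped BigOperators

/-- Inductive step of Theorem 1: the subformula complexity bound
`z ≤ c' · nb · ω^κ · (1 + c₂cc'/n)^nb` propagates from the children (at height `nb - 1`)
to a node at height `nb`. -/
theorem stmt_10 (c₁ c₂ ω c' c : ℝ) (n nb : ℕ)
    (hc₁ : 0 ≤ c₁) (hc₂ : 0 ≤ c₂) (hω : 1 < ω) (hc' : 1 + c₁ ≤ c') (hc : 0 < c)
    (hcc : c₂ * c * c' ≤ 1) (hn : 1 ≤ n) (hnb : 1 ≤ nb)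
    (cc : ℕ) (z : Fin cc → ℝ) (κb : Fin cc → ℕ)
    (strong : Fin cc → Prop) [DecidablePred strong]
    (hne : (Finset.univ.filter strong).Nonempty)
    (triv : Prop) (w : ℝ) (κd : ℕ) (zd : ℝ)
    (hwt : triv → w = 1) (hwf : ¬triv → w ≤ ω) (hw0 : 0 ≤ w)
    (hκt : triv → ∀ j, strong j → κb j ≤ κd)
    (hκf : ¬triv → ∀ j, strong j → κb j + 1 ≤ κd)
    (hzd : zd ≤ c₁ + w *
        ((Finset.univ.filter strong).sup' hne z) * (1 + c₂ * c * c' / n))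
    (hind : ∀ j : Fin cc,
        z j ≤ c' * (nb - 1 : ℕ) * ω ^ κb j * (1 + c₂ * c * c' / n) ^ (nb - 1)) :
    zd ≤ c' * nb * ω ^ κd * (1 + c₂ * c * c' / n) ^ nb := by
  set ε : ℝ := c₂ * c * c' / n with hεdef
  have hc'1 : (1:ℝ) ≤ c' := by linarith
  have hω1 : (1:ℝ) ≤ ω := le_of_lt hω
  have hε : 0 ≤ ε := by
    apply div_nonneg
    · positivity
    · exact Nat.cast_nonneg n
  have h1ε : (1:ℝ) ≤ 1 + ε := by linarith
  have hcnb : (0:ℝ) ≤ c' * (nb - 1 : ℕ) := by positivity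
  have hpows : (0:ℝ) ≤ (1 + ε) ^ (nb - 1) := by positivity
  -- key bound on w * sup
  have hWS : w * ((Finset.univ.filter strong).sup' hne z)
      ≤ c' * (nb - 1 : ℕ) * ω ^ κd * (1 + ε) ^ (nb - 1) := by
    by_cases ht : triv
    · rw [hwt ht, one_mul]
      apply Finset.sup'_le
      intro j hj
      have hjs : strong j := (Finset.mem_filter.mp hj).2
      calc z j ≤ c' * (nb - 1 : ℕ) * ω ^ κb j * (1 + ε) ^ (nb - 1) := hind j
        _ ≤ c' * (nb - 1 : ℕ) * ω ^ κd * (1 + ε) ^ (nb - 1) := by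
            apply mul_le_mul_of_nonneg_right _ hpows
            exact mul_le_mul_of_nonneg_left
              (pow_le_pow_right₀ hω1 (hκt ht j hjs)) hcnb
    · have hκ := hκf ht
      have hB : ((Finset.univ.filter strong).sup' hne z)
          ≤ c' * (nb - 1 : ℕ) * ω ^ (κd - 1) * (1 + ε) ^ (nb - 1) := by
        apply Finset.sup'_le
        intro j hj
        have hjs : strong j := (Finset.mem_filter.mp hj).2
        have : κb j ≤ κd - 1 := by have := hκ j hjs; omega
        calc z j ≤ c' * (nb - 1 : ℕ) * ω ^ κb j * (1 + ε) ^ (nb - 1) := hind j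
          _ ≤ c' * (nb - 1 : ℕ) * ω ^ (κd - 1) * (1 + ε) ^ (nb - 1) := by
              apply mul_le_mul_of_nonneg_right _ hpows
              exact mul_le_mul_of_nonneg_left (pow_le_pow_right₀ hω1 this) hcnb
      have hB0 : 0 ≤ c' * (nb - 1 : ℕ) * ω ^ (κd - 1) * (1 + ε) ^ (nb - 1) := by
        positivity
      have hκd1 : 1 ≤ κd := by
        obtain ⟨j₀, hj₀⟩ := hne
        exact le_trans (Nat.le_add_left 1 _) (hκ j₀ (Finset.mem_filter.mp hj₀).2)
      calc w * ((Finset.univ.filter strong).sup' hne z)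
          ≤ w * (c' * (nb - 1 : ℕ) * ω ^ (κd - 1) * (1 + ε) ^ (nb - 1)) :=
            mul_le_mul_of_nonneg_left hB hw0
        _ ≤ ω * (c' * (nb - 1 : ℕ) * ω ^ (κd - 1) * (1 + ε) ^ (nb - 1)) :=
            mul_le_mul_of_nonneg_right (hwf ht) hB0
        _ = c' * (nb - 1 : ℕ) * (ω ^ (κd - 1) * ω) * (1 + ε) ^ (nb - 1) := by ring
        _ = c' * (nb - 1 : ℕ) * ω ^ κd * (1 + ε) ^ (nb - 1) := by
            rw [← pow_succ, Nat.sub_add_cancel hκd1]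
  have hstep : zd ≤ c₁ + c' * (nb - 1 : ℕ) * ω ^ κd * (1 + ε) ^ nb := by
    have h1 : w * ((Finset.univ.filter strong).sup' hne z) * (1 + ε)
        ≤ c' * (nb - 1 : ℕ) * ω ^ κd * (1 + ε) ^ (nb - 1) * (1 + ε) :=
      mul_le_mul_of_nonneg_right hWS (by linarith)
    have h2 : c' * (nb - 1 : ℕ) * ω ^ κd * (1 + ε) ^ (nb - 1) * (1 + ε)
        = c' * (nb - 1 : ℕ) * ω ^ κd * (1 + ε) ^ nb := by
      rw [mul_assoc, ← pow_succ, Nat.sub_add_cancel hnb]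
    linarith [hzd]
  have hA : (1:ℝ) ≤ ω ^ κd * (1 + ε) ^ nb := by
    have h1 : (1:ℝ) ≤ ω ^ κd := one_le_pow₀ hω1
    have h2 : (1:ℝ) ≤ (1 + ε) ^ nb := one_le_pow₀ h1ε
    nlinarith
  have hcast : ((nb - 1 : ℕ) : ℝ) = (nb : ℝ) - 1 := by
    have : (nb - 1) + 1 = nb := Nat.sub_add_cancel hnb
    have := congrArg (fun m : ℕ => (m : ℝ)) this
    push_cast at this
    linarith
  rw [hcast] at hstep
  nlinarith [hstep, hA, hc', hc₁]
end
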